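/- Let (X,U,p,r,γ) be a finite MDP with rewards satisfying 0 ≤ r(x,u) ≤ 1 for all (x,u). Let π_b (behavior policy), π_i, and π_{i+1} be policies whose state–action value functions satisfy their Bellman equations, with value functions V^{π_i}, V^{π_{i+1}} and advantage function A^{π_i}, and assume π_{i+1}(u|x) > 0 for all x ∈ X and u ∈ U. Let μ be a probability mass function on X and d_{π_b} the discounted state visitation distribution of π_b with initial distribution μ. Then (1−γ) ( Σ_{x∈X} μ(x) V^{π_{i+1}}(x) − Σ_{x∈X} μ(x) V^{π_i}(x) ) ≥ Σ_{x∈X} d_{π_b}(x) Σ_{u∈U} π_b(u|x) A^{π_i}(x,u) − (√2/(1−γ)) Σ_{x∈X} d_{π_b}(x) √( D_KL(π_b(·|x) ‖ π_{i+1}(·|x)) ). (Theorem 2.) -/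

import Mathlib

open Finset

private noncomputable def klH (t : ℝ) : ℝ :=
  2 * (t + 2) * (t * Real.log t - t + 1) - 3 * (t - 1) ^ 2

private noncomputable def klH1 (t : ℝ) : ℝ :=
  2 * (t * Real.log t - t + 1) + 2 * (t + 2) * Real.log t - 6 * (t - 1)

private lemma klH_hasDeriv {t : ℝ} (ht : 0 < t) : HasDerivAt klH (klH1 t) t := by
  have hg : HasDerivAt (fun x : ℝ => x * Real.log x - x + 1) (Real.log t) t := by
    have := ((Real.hasDerivAt_mul_log ht.ne').sub (hasDerivAt_id t)).add_const 1
    simpa using this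
  have hl : HasDerivAt (fun x : ℝ => 2 * (x + 2)) 2 t := by
    simpa using ((hasDerivAt_id t).add_const 2).const_mul 2
  have hq : HasDerivAt (fun x : ℝ => 3 * (x - 1) ^ 2) (3 * (2 * (t - 1))) t := by
    have := (((hasDerivAt_id t).sub_const 1).pow 2).const_mul 3
    simpa using this
  have := (hl.mul hg).sub hq
  exact this.congr_deriv (by unfold klH1; ring)

private lemma klH1_hasDeriv {t : ℝ} (ht : 0 < t) :
    HasDerivAt klH1 (4 * Real.log t + 4 * t⁻¹ - 4) t := by
  have hg : HasDerivAt (fun x : ℝ => 2 * (x * Real.log x - x + 1)) (2 * Real.log t) t := by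
    have := (((Real.hasDerivAt_mul_log ht.ne').sub (hasDerivAt_id t)).add_const 1).const_mul 2
    exact this.congr_deriv (by ring)
  have hl : HasDerivAt (fun x : ℝ => 2 * (x + 2) * Real.log x)
      (2 * Real.log t + 2 * (t + 2) * t⁻¹) t := by
    have := (((hasDerivAt_id t).add_const 2).const_mul 2).mul (Real.hasDerivAt_log ht.ne')
    exact this.congr_deriv (by simp only [id_eq]; ring)
  have hq : HasDerivAt (fun x : ℝ => 6 * (x - 1)) 6 t := by
    simpa using ((hasDerivAt_id t).sub_const 1).const_mul 6
  have := (hg.add hl).sub hq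
  exact this.congr_deriv (by field_simp; ring)

private lemma klH1_mono : MonotoneOn klH1 (Set.Ioi 0) := by
  apply monotoneOn_of_deriv_nonneg (convex_Ioi 0)
  · exact fun x hx => (klH1_hasDeriv hx).continuousAt.continuousWithinAt
  · rw [interior_Ioi]
    exact fun x hx => (klH1_hasDeriv hx).differentiableAt.differentiableWithinAt
  · rw [interior_Ioi]
    intro x hx
    rw [(klH1_hasDeriv hx).deriv]
    have := Real.one_sub_inv_le_log_of_pos hx
    linarith

private lemma klH1_one : klH1 1 = 0 := by simp [klH1]

private lemma klH_one : klH 1 = 0 := by simp [klH]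

private lemma klH_nonneg {t : ℝ} (ht : 0 < t) : 0 ≤ klH t := by
  rcases le_total t 1 with h1 | h1
  · have hanti : AntitoneOn klH (Set.Ioc 0 1) := by
      apply antitoneOn_of_deriv_nonpos (convex_Ioc 0 1)
      · exact fun x hx => (klH_hasDeriv hx.1).continuousAt.continuousWithinAt
      · rw [interior_Ioc]
        exact fun x hx => (klH_hasDeriv hx.1).differentiableAt.differentiableWithinAt
      · rw [interior_Ioc]
        intro x hx
        rw [(klH_hasDeriv hx.1).deriv]
        have := klH1_mono (Set.mem_Ioi.mpr hx.1) (Set.mem_Ioi.mpr one_pos) hx.2.le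
        rw [klH1_one] at this
        exact this
    have := hanti (Set.mem_Ioc.mpr ⟨ht, h1⟩) (Set.mem_Ioc.mpr ⟨one_pos, le_refl 1⟩) h1
    rw [klH_one] at this
    exact this
  · have hmono : MonotoneOn klH (Set.Ici 1) := by
      apply monotoneOn_of_deriv_nonneg (convex_Ici 1)
      · exact fun x hx => (klH_hasDeriv (lt_of_lt_of_le one_pos hx)).continuousAt.continuousWithinAt
      · rw [interior_Ici]
        exact fun x hx => (klH_hasDeriv (lt_trans one_pos hx)).differentiableAt.differentiableWithinAt
      · rw [interior_Ici]
        intro x hx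
        rw [(klH_hasDeriv (lt_trans one_pos hx)).deriv]
        have := klH1_mono (Set.mem_Ioi.mpr one_pos) (Set.mem_Ioi.mpr (lt_trans one_pos hx)) hx.le
        rw [klH1_one] at this
        exact this
    have := hmono (Set.mem_Ici.mpr (le_refl 1)) (Set.mem_Ici.mpr h1) h1
    rw [klH_one] at this
    exact this

private lemma kl_scalar {t : ℝ} (ht : 0 < t) :
    3 * (t - 1) ^ 2 ≤ 2 * (t + 2) * (t * Real.log t - t + 1) := by
  have := klH_nonneg ht
  unfold klH at this
  linarith

private lemma kl_term {p q : ℝ} (hp : 0 ≤ p) (hq : 0 < q) :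
    3 * (p - q) ^ 2 ≤ 2 * (p + 2 * q) * (p * Real.log (p / q) - p + q) := by
  rcases eq_or_lt_of_le hp with h0 | h0
  · rw [← h0]
    simp
    nlinarith [sq_nonneg q]
  · have ht : 0 < p / q := div_pos h0 hq
    have key := kl_scalar ht
    set t := p / q with htdef
    have hpt : p = t * q := by rw [htdef, div_mul_cancel₀ _ hq.ne']
    rw [hpt]
    nlinarith [mul_le_mul_of_nonneg_left key (sq_nonneg q)]

private lemma pinsker_finset {U : Type*} [Fintype U] (P Q : U → ℝ)
    (hP : ∀ u, 0 ≤ P u) (hQ : ∀ u, 0 < Q u)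
    (hPs : ∑ u, P u = 1) (hQs : ∑ u, Q u = 1) :
    (∑ u, |P u - Q u|) ^ 2 ≤ 2 * ∑ u, P u * Real.log (P u / Q u) := by
  have hw : ∀ u, 0 < P u + 2 * Q u := fun u => by
    have h1 := hP u; have h2 := hQ u; linarith
  have hws : ∑ u, (P u + 2 * Q u) = 3 := by
    rw [Finset.sum_add_distrib, hPs, ← Finset.mul_sum, hQs]; norm_num
  have cs := Finset.sq_sum_div_le_sum_sq_div Finset.univ (fun u => |P u - Q u|)
      (g := fun u => P u + 2 * Q u) (fun u _ => hw u)
  rw [hws] at cs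
  have hterm : ∀ u ∈ Finset.univ (α := U), |P u - Q u| ^ 2 / (P u + 2 * Q u) ≤
      2 / 3 * (P u * Real.log (P u / Q u) - P u + Q u) := by
    intro u _
    rw [sq_abs, div_le_iff₀ (hw u)]
    nlinarith [kl_term (hP u) (hQ u)]
  have hsum := Finset.sum_le_sum hterm
  rw [← Finset.mul_sum] at hsum
  have hsplit : ∑ u, (P u * Real.log (P u / Q u) - P u + Q u)
      = ∑ u, P u * Real.log (P u / Q u) := by
    rw [Finset.sum_add_distrib, Finset.sum_sub_distrib, hPs, hQs]; ring
  rw [hsplit] at hsum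
  have := le_trans cs hsum
  linarith


private lemma sum_swap_aux {X U : Type*} [Fintype X] [Fintype U]
    (d : X → ℝ) (πb : X → U → ℝ) (p : X → U → X → ℝ) (f : X → ℝ) :
    ∑ x', (∑ x, ∑ u, d x * πb x u * p x u x') * f x'
      = ∑ x, d x * ∑ u, πb x u * ∑ x', p x u x' * f x' := by
  simp only [Finset.sum_mul, Finset.mul_sum]
  rw [Finset.sum_comm]
  refine Finset.sum_congr rfl fun x _ => ?_
  rw [Finset.sum_comm]
  refine Finset.sum_congr rfl fun u _ => Finset.sum_congr rfl fun x' _ => by ring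

private lemma flow_identity {X U : Type*} [Fintype X] [Fintype U]
    (γ : ℝ) (μ d : X → ℝ) (πb : X → U → ℝ) (p : X → U → X → ℝ)
    (hd_flow : ∀ x', d x' = (1 - γ) * μ x' + γ * ∑ x, ∑ u, d x * πb x u * p x u x')
    (f : X → ℝ) :
    ∑ x, d x * f x
      = (1 - γ) * (∑ x, μ x * f x)
        + γ * ∑ x, d x * ∑ u, πb x u * ∑ x', p x u x' * f x' := by
  calc ∑ x', d x' * f x'
      = ∑ x', ((1 - γ) * μ x' + γ * ∑ x, ∑ u, d x * πb x u * p x u x') * f x' :=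
        Finset.sum_congr rfl fun x' _ => by rw [hd_flow x']
    _ = (1 - γ) * (∑ x', μ x' * f x')
        + γ * ∑ x', (∑ x, ∑ u, d x * πb x u * p x u x') * f x' := by
        have h : ∀ x' ∈ Finset.univ (α := X),
            ((1 - γ) * μ x' + γ * ∑ x, ∑ u, d x * πb x u * p x u x') * f x'
              = (1 - γ) * (μ x' * f x')
                + γ * ((∑ x, ∑ u, d x * πb x u * p x u x') * f x') := fun _ _ => by ring
        rw [Finset.sum_congr rfl h, Finset.sum_add_distrib, ← Finset.mul_sum, ← Finset.mul_sum]
    _ = (1 - γ) * (∑ x, μ x * f x)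
        + γ * ∑ x, d x * ∑ u, πb x u * ∑ x', p x u x' * f x' := by
        rw [sum_swap_aux]

private lemma perf_diff {X U : Type*} [Fintype X] [Fintype U]
    (γ : ℝ)
    (p : X → U → X → ℝ)
    (r : X → U → ℝ)
    (πb πi πi1 : X → U → ℝ)
    (hπb_sum : ∀ x, ∑ u, πb x u = 1)
    (Qi Qi1 : X → U → ℝ)
    (hQi : ∀ x u, Qi x u = r x u + γ * ∑ x', p x u x' * ∑ u', πi x' u' * Qi x' u')
    (hQi1 : ∀ x u, Qi1 x u = r x u + γ * ∑ x', p x u x' * ∑ u', πi1 x' u' * Qi1 x' u')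
    (μ : X → ℝ)
    (d : X → ℝ)
    (hd_flow : ∀ x', d x' = (1 - γ) * μ x' + γ * ∑ x, ∑ u, d x * πb x u * p x u x') :
    (1 - γ) *
        ((∑ x, μ x * ∑ u, πi1 x u * Qi1 x u) - ∑ x, μ x * ∑ u, πi x u * Qi x u)
      = (∑ x, d x * ∑ u, πb x u * (Qi x u - ∑ u', πi x u' * Qi x u'))
        + ∑ x, d x * ∑ u, (πi1 x u - πb x u) * Qi1 x u := by
  set f : X → ℝ := fun x => (∑ u, πi1 x u * Qi1 x u) - ∑ u, πi x u * Qi x u with hf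
  have claim_pt : ∀ x,
      (∑ u, πb x u * (Qi x u - ∑ u', πi x u' * Qi x u'))
        + (∑ u, (πi1 x u - πb x u) * Qi1 x u)
      = f x - γ * ∑ u, πb x u * ∑ x', p x u x' * f x' := by
    intro x
    have h1 : ∑ u, πb x u * (Qi x u - ∑ u', πi x u' * Qi x u')
        = (∑ u, πb x u * Qi x u) - ∑ u', πi x u' * Qi x u' := by
      simp only [mul_sub, Finset.sum_sub_distrib, ← Finset.sum_mul, hπb_sum, one_mul]
    have h2 : ∑ u, (πi1 x u - πb x u) * Qi1 x u
        = (∑ u, πi1 x u * Qi1 x u) - ∑ u, πb x u * Qi1 x u := by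
      simp only [sub_mul, Finset.sum_sub_distrib]
    have h4 : ∑ u, πb x u * (Qi1 x u - Qi x u)
        = (∑ u, πb x u * Qi1 x u) - ∑ u, πb x u * Qi x u := by
      simp only [mul_sub, Finset.sum_sub_distrib]
    have h3 : ∑ u, πb x u * (Qi1 x u - Qi x u)
        = γ * ∑ u, πb x u * ∑ x', p x u x' * f x' := by
      rw [Finset.mul_sum]
      refine Finset.sum_congr rfl fun u _ => ?_
      rw [hQi1 x u, hQi x u, hf]
      simp only [mul_sub, Finset.sum_sub_distrib]
      ring
    have hfx : f x = (∑ u, πi1 x u * Qi1 x u) - ∑ u, πi x u * Qi x u := by rw [hf]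
    rw [h1, h2]
    rw [h3] at h4
    linarith [h4]
  have flow := flow_identity γ μ d πb p hd_flow f
  have hμf : ∑ x, μ x * f x
      = (∑ x, μ x * ∑ u, πi1 x u * Qi1 x u) - ∑ x, μ x * ∑ u, πi x u * Qi x u := by
    simp only [hf, mul_sub, Finset.sum_sub_distrib]
  have hsum : ∑ x, d x * ((∑ u, πb x u * (Qi x u - ∑ u', πi x u' * Qi x u'))
        + (∑ u, (πi1 x u - πb x u) * Qi1 x u))
      = ∑ x, d x * (f x - γ * ∑ u, πb x u * ∑ x', p x u x' * f x') :=
    Finset.sum_congr rfl fun x _ => by rw [claim_pt x]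
  have hL : ∑ x, d x * ((∑ u, πb x u * (Qi x u - ∑ u', πi x u' * Qi x u'))
        + (∑ u, (πi1 x u - πb x u) * Qi1 x u))
      = (∑ x, d x * ∑ u, πb x u * (Qi x u - ∑ u', πi x u' * Qi x u'))
        + ∑ x, d x * ∑ u, (πi1 x u - πb x u) * Qi1 x u := by
    simp only [mul_add, Finset.sum_add_distrib]
  have hR : ∑ x, d x * (f x - γ * ∑ u, πb x u * ∑ x', p x u x' * f x')
      = (∑ x, d x * f x)
        - γ * ∑ x, d x * ∑ u, πb x u * ∑ x', p x u x' * f x' := by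
    have h : ∀ x ∈ Finset.univ (α := X),
        d x * (f x - γ * ∑ u, πb x u * ∑ x', p x u x' * f x')
          = d x * f x - γ * (d x * ∑ u, πb x u * ∑ x', p x u x' * f x') := fun _ _ => by ring
    rw [Finset.sum_congr rfl h, Finset.sum_sub_distrib, ← Finset.mul_sum]
  rw [← hμf]
  rw [hL, hR] at hsum
  linarith [flow, hsum]


private lemma q_range {X U : Type*} [Fintype X] [Fintype U] [Nonempty X] [Nonempty U]
    {γ : ℝ} (hγ0 : 0 ≤ γ) (hγ1 : γ < 1)
    {p : X → U → X → ℝ} (hp_nonneg : ∀ x u x', 0 ≤ p x u x')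
    (hp_sum : ∀ x u, ∑ x', p x u x' = 1)
    {r : X → U → ℝ} (hr0 : ∀ x u, 0 ≤ r x u) (hr1 : ∀ x u, r x u ≤ 1)
    {π : X → U → ℝ} (hπ_nonneg : ∀ x u, 0 ≤ π x u) (hπ_sum : ∀ x, ∑ u, π x u = 1)
    {Q : X → U → ℝ}
    (hQ : ∀ x u, Q x u = r x u + γ * ∑ x', p x u x' * ∑ u', π x' u' * Q x' u') :
    ∀ x u, 0 ≤ Q x u ∧ Q x u ≤ 1 / (1 - γ) := by
  have h1γ : (0:ℝ) < 1 - γ := by linarith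
  obtain ⟨z₀, hmax⟩ := Finite.exists_max (fun z : X × U => Q z.1 z.2)
  obtain ⟨z₁, hmin⟩ := Finite.exists_min (fun z : X × U => Q z.1 z.2)
  have hMle : ∀ x u, Q x u ≤ Q z₀.1 z₀.2 := fun x u => hmax (x, u)
  have hmle : ∀ x u, Q z₁.1 z₁.2 ≤ Q x u := fun x u => hmin (x, u)
  have hVle : ∀ x', ∑ u', π x' u' * Q x' u' ≤ Q z₀.1 z₀.2 := by
    intro x'
    calc ∑ u', π x' u' * Q x' u' ≤ ∑ u', π x' u' * Q z₀.1 z₀.2 :=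
          Finset.sum_le_sum fun u' _ =>
            mul_le_mul_of_nonneg_left (hMle x' u') (hπ_nonneg x' u')
      _ = Q z₀.1 z₀.2 := by rw [← Finset.sum_mul, hπ_sum, one_mul]
  have hVge : ∀ x', Q z₁.1 z₁.2 ≤ ∑ u', π x' u' * Q x' u' := by
    intro x'
    calc Q z₁.1 z₁.2 = ∑ u', π x' u' * Q z₁.1 z₁.2 := by
          rw [← Finset.sum_mul, hπ_sum, one_mul]
      _ ≤ ∑ u', π x' u' * Q x' u' :=
          Finset.sum_le_sum fun u' _ =>
            mul_le_mul_of_nonneg_left (hmle x' u') (hπ_nonneg x' u')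
  have hPle : ∀ x u, ∑ x', p x u x' * ∑ u', π x' u' * Q x' u' ≤ Q z₀.1 z₀.2 := by
    intro x u
    calc ∑ x', p x u x' * ∑ u', π x' u' * Q x' u' ≤ ∑ x', p x u x' * Q z₀.1 z₀.2 :=
          Finset.sum_le_sum fun x' _ =>
            mul_le_mul_of_nonneg_left (hVle x') (hp_nonneg x u x')
      _ = Q z₀.1 z₀.2 := by rw [← Finset.sum_mul, hp_sum, one_mul]
  have hPge : ∀ x u, Q z₁.1 z₁.2 ≤ ∑ x', p x u x' * ∑ u', π x' u' * Q x' u' := by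
    intro x u
    calc Q z₁.1 z₁.2 = ∑ x', p x u x' * Q z₁.1 z₁.2 := by
          rw [← Finset.sum_mul, hp_sum, one_mul]
      _ ≤ ∑ x', p x u x' * ∑ u', π x' u' * Q x' u' :=
          Finset.sum_le_sum fun x' _ =>
            mul_le_mul_of_nonneg_left (hVge x') (hp_nonneg x u x')
  have h2 : Q z₀.1 z₀.2 ≤ 1 + γ * Q z₀.1 z₀.2 := by
    conv_lhs => rw [hQ z₀.1 z₀.2]
    linarith [mul_le_mul_of_nonneg_left (hPle z₀.1 z₀.2) hγ0, hr1 z₀.1 z₀.2]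
  have hMub : Q z₀.1 z₀.2 ≤ 1 / (1 - γ) := by
    rw [le_div_iff₀ h1γ]; nlinarith
  have h3 : γ * Q z₁.1 z₁.2 ≤ Q z₁.1 z₁.2 := by
    conv_rhs => rw [hQ z₁.1 z₁.2]
    linarith [mul_le_mul_of_nonneg_left (hPge z₁.1 z₁.2) hγ0, hr0 z₁.1 z₁.2]
  have hmlb : 0 ≤ Q z₁.1 z₁.2 := by nlinarith
  intro x u
  exact ⟨le_trans hmlb (hmle x u), le_trans (hMle x u) hMub⟩


/-- **Theorem 2.**
For a finite MDP with rewards in `[0,1]`, policies `πb` (behavior), `πi`, `πi1` with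
Bellman-consistent Q-functions, `πi1` everywhere positive, and `d` the discounted
state visitation distribution of `πb`:
`(1−γ)(Σ_x μ(x) V^{πi1}(x) − Σ_x μ(x) V^{πi}(x))
  ≥ Σ_x d(x) Σ_u πb(u|x) A^{πi}(x,u)
    − (√2/(1−γ)) Σ_x d(x) √(D_KL(πb(·|x) ‖ πi1(·|x)))`. -/
theorem policy_improvement_kl_bound
    {X U : Type*} [Fintype X] [Fintype U] [Nonempty X] [Nonempty U]
    (γ : ℝ) (hγ0 : 0 ≤ γ) (hγ1 : γ < 1)
    (p : X → U → X → ℝ)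
    (hp_nonneg : ∀ x u x', 0 ≤ p x u x')
    (hp_sum : ∀ x u, ∑ x', p x u x' = 1)
    (r : X → U → ℝ)
    (hr0 : ∀ x u, 0 ≤ r x u) (hr1 : ∀ x u, r x u ≤ 1)
    (πb πi πi1 : X → U → ℝ)
    (hπb_nonneg : ∀ x u, 0 ≤ πb x u) (hπb_sum : ∀ x, ∑ u, πb x u = 1)
    (hπi_nonneg : ∀ x u, 0 ≤ πi x u) (hπi_sum : ∀ x, ∑ u, πi x u = 1)
    (hπi1_pos : ∀ x u, 0 < πi1 x u) (hπi1_sum : ∀ x, ∑ u, πi1 x u = 1)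
    (Qb Qi Qi1 : X → U → ℝ)
    (hQb : ∀ x u, Qb x u = r x u + γ * ∑ x', p x u x' * ∑ u', πb x' u' * Qb x' u')
    (hQi : ∀ x u, Qi x u = r x u + γ * ∑ x', p x u x' * ∑ u', πi x' u' * Qi x' u')
    (hQi1 : ∀ x u, Qi1 x u = r x u + γ * ∑ x', p x u x' * ∑ u', πi1 x' u' * Qi1 x' u')
    (μ : X → ℝ) (hμ_nonneg : ∀ x, 0 ≤ μ x) (hμ_sum : ∑ x, μ x = 1)
    (d : X → ℝ)
    (hd_flow : ∀ x', d x' = (1 - γ) * μ x' + γ * ∑ x, ∑ u, d x * πb x u * p x u x')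
    (hd_nonneg : ∀ x, 0 ≤ d x) (hd_sum : ∑ x, d x = 1) :
    (1 - γ) *
        ((∑ x, μ x * ∑ u, πi1 x u * Qi1 x u) - ∑ x, μ x * ∑ u, πi x u * Qi x u) ≥
      (∑ x, d x * ∑ u, πb x u * (Qi x u - ∑ u', πi x u' * Qi x u')) -
        (Real.sqrt 2 / (1 - γ)) *
          ∑ x, d x *
            Real.sqrt (∑ u, πb x u * Real.log (πb x u / πi1 x u)) := by
  have h1γ : (0:ℝ) < 1 - γ := by linarith
  have hQrange := q_range hγ0 hγ1 hp_nonneg hp_sum hr0 hr1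
      (fun x u => (hπi1_pos x u).le) hπi1_sum hQi1
  have hid := perf_diff γ p r πb πi πi1 hπb_sum Qi Qi1 hQi hQi1 μ d hd_flow
  have hbound : ∀ x ∈ Finset.univ (α := X),
      d x * (-(Real.sqrt 2 / (1 - γ) *
          Real.sqrt (∑ u, πb x u * Real.log (πb x u / πi1 x u))))
        ≤ d x * ∑ u, (πi1 x u - πb x u) * Qi1 x u := by
    intro x _
    apply mul_le_mul_of_nonneg_left _ (hd_nonneg x)
    have habs : |∑ u, (πi1 x u - πb x u) * Qi1 x u|
        ≤ (∑ u, |πb x u - πi1 x u|) * (1 / (1 - γ)) := by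
      calc |∑ u, (πi1 x u - πb x u) * Qi1 x u|
          ≤ ∑ u, |(πi1 x u - πb x u) * Qi1 x u| := Finset.abs_sum_le_sum_abs _ _
        _ ≤ ∑ u, |πb x u - πi1 x u| * (1 / (1 - γ)) := by
            refine Finset.sum_le_sum fun u _ => ?_
            rw [abs_mul, abs_sub_comm]
            refine mul_le_mul_of_nonneg_left ?_ (abs_nonneg _)
            rw [abs_of_nonneg (hQrange x u).1]
            exact (hQrange x u).2
        _ = (∑ u, |πb x u - πi1 x u|) * (1 / (1 - γ)) := by rw [Finset.sum_mul]
    have hpk := pinsker_finset (πb x) (πi1 x) (hπb_nonneg x) (hπi1_pos x)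
        (hπb_sum x) (hπi1_sum x)
    have hl1nn : 0 ≤ ∑ u, |πb x u - πi1 x u| :=
      Finset.sum_nonneg fun u _ => abs_nonneg _
    have hl1 : ∑ u, |πb x u - πi1 x u|
        ≤ Real.sqrt 2 * Real.sqrt (∑ u, πb x u * Real.log (πb x u / πi1 x u)) := by
      calc ∑ u, |πb x u - πi1 x u|
          = Real.sqrt ((∑ u, |πb x u - πi1 x u|) ^ 2) := (Real.sqrt_sq hl1nn).symm
        _ ≤ Real.sqrt (2 * ∑ u, πb x u * Real.log (πb x u / πi1 x u)) :=
            Real.sqrt_le_sqrt hpk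
        _ = Real.sqrt 2 * Real.sqrt (∑ u, πb x u * Real.log (πb x u / πi1 x u)) :=
            Real.sqrt_mul (by norm_num) _
    have h0 : |∑ u, (πi1 x u - πb x u) * Qi1 x u|
        ≤ (Real.sqrt 2 * Real.sqrt (∑ u, πb x u * Real.log (πb x u / πi1 x u)))
            * (1 / (1 - γ)) :=
      habs.trans (mul_le_mul_of_nonneg_right hl1 (by positivity))
    have hneg := neg_abs_le (∑ u, (πi1 x u - πb x u) * Qi1 x u)
    have heq : Real.sqrt 2 / (1 - γ) *
          Real.sqrt (∑ u, πb x u * Real.log (πb x u / πi1 x u))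
        = (Real.sqrt 2 * Real.sqrt (∑ u, πb x u * Real.log (πb x u / πi1 x u)))
            * (1 / (1 - γ)) := by ring
    linarith
  have hsum := Finset.sum_le_sum hbound
  have hpull : ∑ x, d x * (-(Real.sqrt 2 / (1 - γ) *
        Real.sqrt (∑ u, πb x u * Real.log (πb x u / πi1 x u))))
      = -(Real.sqrt 2 / (1 - γ) *
          ∑ x, d x * Real.sqrt (∑ u, πb x u * Real.log (πb x u / πi1 x u))) := by
    rw [Finset.mul_sum, ← Finset.sum_neg_distrib]
    exact Finset.sum_congr rfl fun x _ => by ring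
  rw [ge_iff_le, hid]
  rw [hpull] at hsum
  linarith
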